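/- Let R be an alternative ring with a nontrivial idempotent e₁ satisfying conditions (i) and (ii), let n ≥ 2 be an integer and let D : R → R be a multiplicative Lie n-derivation. Then for every a ∈ R₁₂ and every b ∈ R₂₁ one has D(a + b) = D(a) + D(b). -/

import Mathlib

/-- The commutative center of a (possibly non-associative, non-unital) ring. -/
def rctr (R : Type*) [NonUnitalNonAssocRing R] : Set R := {z | ∀ x, z * x = x * z}

/-- `R` is an alternative ring. -/
def IsAlt (R : Type*) [NonUnitalNonAssocRing R] : Prop :=
  ∀ x y : R, (x * x) * y = x * (x * y) ∧ (y * x) * x = y * (x * x)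

/-- Peirce components relative to an idempotent `e`. -/
def P11 {R : Type*} [NonUnitalNonAssocRing R] (e : R) : Set R := {x | e * x = x ∧ x * e = x}
def P12 {R : Type*} [NonUnitalNonAssocRing R] (e : R) : Set R := {x | e * x = x ∧ x * e = 0}
def P21 {R : Type*} [NonUnitalNonAssocRing R] (e : R) : Set R := {x | e * x = 0 ∧ x * e = x}
def P22 {R : Type*} [NonUnitalNonAssocRing R] (e : R) : Set R := {x | e * x = 0 ∧ x * e = 0}

/-- The iterated commutator `p_n`: `p_1(x) = x`,
`p_n(x_1,…,x_n) = [p_{n-1}(x_1,…,x_{n-1}), x_n]`. -/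
def pn {R : Type*} [NonUnitalNonAssocRing R] : (n : ℕ) → (Fin n → R) → R
  | 0, _ => 0
  | 1, x => x 0
  | (m+2), x =>
      pn (m+1) (fun i => x i.castSucc) * x (Fin.last (m+1))
        - x (Fin.last (m+1)) * pn (m+1) (fun i => x i.castSucc)

/-- A (not necessarily additive) map `D` is a multiplicative Lie `n`-derivation. -/
def IsMultLieNDeriv {R : Type*} [NonUnitalNonAssocRing R] (n : ℕ) (D : R → R) : Prop :=
  ∀ x : Fin n → R, D (pn n x) = ∑ i : Fin n, pn n (Function.update x i (D (x i)))

/-! ### Auxiliary lemmas -/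

section PnHelpers
variable {R : Type*} [NonUnitalNonAssocRing R]

lemma pn_succ (m : ℕ) (w : Fin (m+2) → R) :
    pn (m+2) w = pn (m+1) (fun i => w i.castSucc) * w (Fin.last (m+1))
        - w (Fin.last (m+1)) * pn (m+1) (fun i => w i.castSucc) := rfl

lemma pn_one (w : Fin 1 → R) : pn 1 w = w 0 := rfl

lemma last_ne_castSucc (m : ℕ) (j : Fin (m+1)) : j.castSucc ≠ Fin.last (m+1) := by
  simp [Fin.ext_iff]
  omega

lemma pn_isolated (m : ℕ) : ∀ (w : Fin (m+2) → R) (i : Fin (m+2)),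
    (∀ j, j ≠ i → w j = 0) → pn (m+2) w = 0 := by
  induction m with
  | zero =>
    intro w i h
    rw [pn_succ]
    by_cases hi : i = 0
    · have h1 : w (Fin.last 1) = 0 := h _ (by subst hi; decide)
      simp [show w 1 = 0 from h1]
    · have h0 : w 0 = 0 := h 0 (fun hh => hi hh.symm)
      have hp : pn 1 (fun j : Fin 1 => w j.castSucc) = w 0 := by
        rw [pn_one]; norm_num
      rw [hp, h0]
      simp
  | succ m ih =>
    intro w i h
    rw [pn_succ]
    by_cases hi : i = Fin.last (m+2)
    · have hz : pn (m+2) (fun j => w j.castSucc) = 0 := by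
        apply ih _ 0
        intro j _
        apply h
        subst hi
        exact last_ne_castSucc _ j
      simp [hz]
    · have h1 : w (Fin.last (m+2)) = 0 := h _ (fun hh => hi hh.symm)
      simp [h1]

lemma pn_update_add (m : ℕ) : ∀ (w : Fin (m+2) → R) (t : Fin (m+2)) (x x' : R),
    pn (m+2) (Function.update w t (x + x'))
      = pn (m+2) (Function.update w t x) + pn (m+2) (Function.update w t x') := by
  induction m with
  | zero =>
    intro w t x x'
    rw [pn_succ 0 (Function.update w t (x+x')), pn_succ 0 (Function.update w t x),
      pn_succ 0 (Function.update w t x'), pn_one, pn_one, pn_one]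
    have hL : Fin.last 1 = (1 : Fin 2) := rfl
    have hc : (0 : Fin 1).castSucc = (0 : Fin 2) := rfl
    fin_cases t
    · simp only [Function.update_apply, hL, hc]
      norm_num
      rw [add_mul, mul_add]
      abel
    · simp only [Function.update_apply, hL, hc]
      norm_num
      rw [add_mul, mul_add]
      abel
  | succ m ih =>
    intro w t x x'
    rw [pn_succ (m+1) (Function.update w t (x+x')), pn_succ (m+1) (Function.update w t x),
      pn_succ (m+1) (Function.update w t x')]
    by_cases ht : t = Fin.last (m+1+1)
    · subst ht
      have hres : ∀ v : R, (fun i : Fin (m+2) => Function.update w (Fin.last (m+1+1)) v i.castSucc)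
          = fun i : Fin (m+2) => w i.castSucc := by
        intro v; funext i
        rw [Function.update_apply, if_neg (last_ne_castSucc _ i)]
      rw [hres, hres, hres]
      simp only [Function.update_self]
      set P := pn (m+2) (fun i : Fin (m+2) => w i.castSucc)
      rw [mul_add, add_mul]
      abel
    · obtain ⟨t', rfl⟩ : ∃ t' : Fin (m+2), t'.castSucc = t := by
        refine ⟨⟨t.1, ?_⟩, by simp [Fin.ext_iff]⟩
        have h2 := t.2
        rcases Nat.lt_or_ge t.1 (m+2) with h|h
        · exact h
        · exfalso; apply ht; apply Fin.ext; simp [Fin.last]; omega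
      have hlast : ∀ v : R, Function.update w t'.castSucc v (Fin.last (m+1+1)) = w (Fin.last (m+1+1)) := by
        intro v
        rw [Function.update_apply, if_neg (fun hh => (last_ne_castSucc _ t') hh.symm)]
      have hres : ∀ v : R, (fun i : Fin (m+2) => Function.update w t'.castSucc v i.castSucc)
          = Function.update (fun i : Fin (m+2) => w i.castSucc) t' v := by
        intro v; funext i
        rw [Function.update_apply, Function.update_apply]
        by_cases hi : i = t'
        · simp [hi]
        · rw [if_neg (by simpa [Fin.castSucc_inj] using hi), if_neg hi]
      rw [hlast, hlast, hlast, hres, hres, hres, ih]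
      set A := pn (m+2) (Function.update (fun i : Fin (m+2) => w i.castSucc) t' x)
      set B := pn (m+2) (Function.update (fun i : Fin (m+2) => w i.castSucc) t' x')
      set c := w (Fin.last (m+1+1))
      rw [add_mul, mul_add]
      abel

end PnHelpers

/-- The basic commutator-with-`e` map. -/
def kappa {R : Type*} [NonUnitalNonAssocRing R] (e : R) : R → R := fun u => u * e - e * u

section KappaTuples
variable {R : Type*} [NonUnitalNonAssocRing R]

lemma pn_vtup (e : R) : ∀ (k : ℕ) (u : R),
    pn (k+1) (fun j : Fin (k+1) => if j = 0 then u else e) = (kappa e)^[k] u := by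
  intro k
  induction k with
  | zero => intro u; rw [pn_one]; simp
  | succ k ih =>
    intro u
    rw [pn_succ k]
    have hres : (fun i : Fin (k+1) => if (i.castSucc : Fin (k+2)) = 0 then u else e)
        = fun j : Fin (k+1) => if j = 0 then u else e := by
      funext j
      by_cases hj : j = 0
      · simp [hj]
      · rw [if_neg (by simpa [Fin.castSucc_eq_zero_iff] using hj), if_neg hj]
    have hlast : (if (Fin.last (k+1) : Fin (k+2)) = 0 then u else e) = e := by
      rw [if_neg]
      simp [Fin.ext_iff]
    rw [hres, hlast, ih, Function.iterate_succ_apply']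
    rfl

lemma pn_btup (e : R) : ∀ (k : ℕ) (x y : R),
    pn (k+2) (fun j : Fin (k+2) => if j = 0 then x else if j = 1 then y else e)
      = (kappa e)^[k] (x * y - y * x) := by
  intro k
  induction k with
  | zero =>
    intro x y
    rw [pn_succ 0, pn_one]
    norm_num
    simp [show (Fin.last (0+1) : Fin 2) = 1 from rfl]
  | succ k ih =>
    intro x y
    rw [pn_succ (k+1)]
    have hres : (fun i : Fin (k+2) => if (i.castSucc : Fin (k+3)) = 0 then x else if (i.castSucc : Fin (k+3)) = 1 then y else e)
        = fun j : Fin (k+2) => if j = 0 then x else if j = 1 then y else e := by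
      funext j
      by_cases hj : j = 0
      · simp [hj]
      · rw [if_neg (by simpa [Fin.castSucc_eq_zero_iff] using hj), if_neg hj]
        by_cases hj1 : j = 1
        · rw [if_pos (by simp [hj1, Fin.ext_iff]), if_pos hj1]
        · rw [if_neg (by simpa [Fin.ext_iff] using fun h => hj1 (Fin.ext (by simpa [Fin.ext_iff] using h))), if_neg hj1]
    have hlast : (if (Fin.last (k+2) : Fin (k+3)) = 0 then x else if (Fin.last (k+2) : Fin (k+3)) = 1 then y else e) = e := by
      rw [if_neg (by simp [Fin.ext_iff]), if_neg (by simp [Fin.ext_iff])]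
    rw [hres, hlast, ih, Function.iterate_succ_apply']
    rfl

end KappaTuples

section AltHelpers
variable {R : Type*} [NonUnitalNonAssocRing R]

lemma alt_lin1 (halt : IsAlt R) (x y z : R) :
    (x*y)*z + (y*x)*z = x*(y*z) + y*(x*z) := by
  have h := (halt (x+y) z).1
  simp only [mul_add, add_mul] at h
  rw [(halt x z).1, (halt y z).1] at h
  have h2 : ((x*y)*z + (y*x)*z) - (x*(y*z) + y*(x*z)) = 0 := by
    have h3 := sub_eq_zero_of_eq h
    rw [← h3]; abel
  exact sub_eq_zero.mp h2

lemma alt_lin2 (halt : IsAlt R) (x y z : R) :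
    (x*y)*z + (x*z)*y = x*(y*z) + x*(z*y) := by
  have h := (halt (y+z) x).2
  simp only [mul_add, add_mul] at h
  rw [(halt y x).2, (halt z x).2] at h
  have h2 : ((x*y)*z + (x*z)*y) - (x*(y*z) + x*(z*y)) = 0 := by
    have h3 := sub_eq_zero_of_eq h
    rw [← h3]; abel
  exact sub_eq_zero.mp h2

lemma lswap12 (halt : IsAlt R) (x y z : R) :
    (x*y)*z - x*(y*z) = -((y*x)*z - y*(x*z)) := by
  have h := alt_lin1 halt x y z
  apply eq_of_sub_eq_zero
  calc (x*y)*z - x*(y*z) - -((y*x)*z - y*(x*z))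
      = ((x*y)*z + (y*x)*z) - (x*(y*z) + y*(x*z)) := by abel
    _ = 0 := sub_eq_zero_of_eq h

lemma lswap23 (halt : IsAlt R) (x y z : R) :
    (x*y)*z - x*(y*z) = -((x*z)*y - x*(z*y)) := by
  have h := alt_lin2 halt x y z
  apply eq_of_sub_eq_zero
  calc (x*y)*z - x*(y*z) - -((x*z)*y - x*(z*y))
      = ((x*y)*z + (x*z)*y) - (x*(y*z) + x*(z*y)) := by abel
    _ = 0 := sub_eq_zero_of_eq h

lemma PL_py (halt : IsAlt R) (e p y : R) (hp1 : e*p = p) (hp2 : p*e = p)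
    (hy1 : e*y = 0) (hy2 : y*e = y) : p * y = 0 := by
  have h2 : (y*e)*p - y*(e*p) = 0 := by rw [hy2, hp1, sub_self]
  calc p*y = (p*e)*y - p*(e*y) := by rw [hp2, hy1, mul_zero, sub_zero]
    _ = -((e*p)*y - e*(p*y)) := lswap12 halt p e y
    _ = -(-((e*y)*p - e*(y*p))) := by rw [← lswap23 halt e p y]
    _ = (e*y)*p - e*(y*p) := neg_neg _
    _ = -((y*e)*p - y*(e*p)) := lswap12 halt e y p
    _ = 0 := by rw [h2, neg_zero]

lemma PL_yp (halt : IsAlt R) (e p y : R) (hp1 : e*p = p) (hp2 : p*e = p)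
    (hy1 : e*y = 0) (hy2 : y*e = y) :
    e*(y*p) = 0 ∧ (y*p)*e = y*p := by
  have h2 : (y*e)*p - y*(e*p) = 0 := by rw [hy2, hp1, sub_self]
  constructor
  · have h3 : (e*y)*p - e*(y*p) = -(e*(y*p)) := by rw [hy1, zero_mul, zero_sub]
    have h4 : (e*y)*p - e*(y*p) = 0 := by rw [lswap12 halt e y p, h2, neg_zero]
    exact neg_eq_zero.mp (h3.symm.trans h4)
  · have h3 : (y*p)*e - y*(p*e) = (y*p)*e - y*p := by rw [hp2]
    have h4 : (y*p)*e - y*(p*e) = 0 := by rw [lswap23 halt y p e, h2, neg_zero]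
    exact sub_eq_zero.mp (h3.symm.trans h4)

lemma PL_qy (halt : IsAlt R) (e q y : R) (hq1 : e*q = 0) (hq2 : q*e = 0)
    (hy1 : e*y = 0) (hy2 : y*e = y) :
    e*(q*y) = 0 ∧ (q*y)*e = q*y := by
  have h2 : (q*e)*y - q*(e*y) = 0 := by rw [hq2, hy1, zero_mul, mul_zero, sub_self]
  constructor
  · have h3 : (e*q)*y - e*(q*y) = -(e*(q*y)) := by rw [hq1, zero_mul, zero_sub]
    have h4 : (e*q)*y - e*(q*y) = 0 := by rw [lswap12 halt e q y, h2, neg_zero]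
    exact neg_eq_zero.mp (h3.symm.trans h4)
  · have h3 : (q*y)*e - q*(y*e) = (q*y)*e - q*y := by rw [hy2]
    have h4 : (q*y)*e - q*(y*e) = 0 := by rw [lswap23 halt q y e, h2, neg_zero]
    exact sub_eq_zero.mp (h3.symm.trans h4)

lemma PL_yq (halt : IsAlt R) (e q y : R) (hq1 : e*q = 0) (hq2 : q*e = 0)
    (hy1 : e*y = 0) (hy2 : y*e = y) : y * q = 0 := by
  have hqy2 : (q*y)*e = q*y := (PL_qy halt e q y hq1 hq2 hy1 hy2).2
  have h5 : (q*y)*e - q*(y*e) = 0 := by rw [hqy2, hy2, sub_self]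
  have hα : (y*q)*e = 0 := by
    have h3 : (y*q)*e - y*(q*e) = (y*q)*e := by rw [hq2, mul_zero, sub_zero]
    have h4 : (y*q)*e - y*(q*e) = 0 := by rw [lswap12 halt y q e, h5, neg_zero]
    exact h3.symm.trans h4
  have h6 : (y*e)*q - y*(e*q) = y*q := by rw [hy2, hq1, mul_zero, sub_zero]
  have h7 : (y*e)*q - y*(e*q) = 0 := by
    rw [lswap23 halt y e q]
    rw [hq2, mul_zero, sub_zero, hα, neg_zero]
  exact h6.symm.trans h7

lemma PL_ay (halt : IsAlt R) (e a y : R) (ha1 : e*a = a) (ha2 : a*e = 0)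
    (hy1 : e*y = 0) (hy2 : y*e = y) :
    (e*(a*y) = a*y ∧ (a*y)*e = a*y) ∧ (e*(y*a) = 0 ∧ (y*a)*e = 0) := by
  have h6 : (a*e)*y - a*(e*y) = 0 := by rw [ha2, hy1, zero_mul, mul_zero, sub_self]
  have h7 : (y*e)*a - y*(e*a) = 0 := by rw [hy2, ha1, sub_self]
  refine ⟨⟨?_, ?_⟩, ?_, ?_⟩
  · have h3 : (e*a)*y - e*(a*y) = a*y - e*(a*y) := by rw [ha1]
    have h4 : (e*a)*y - e*(a*y) = 0 := by rw [lswap12 halt e a y, h6, neg_zero]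
    have h5 := sub_eq_zero.mp (h3.symm.trans h4)
    exact h5.symm
  · have h3 : (a*y)*e - a*(y*e) = (a*y)*e - a*y := by rw [hy2]
    have h4 : (a*y)*e - a*(y*e) = 0 := by rw [lswap23 halt a y e, h6, neg_zero]
    exact sub_eq_zero.mp (h3.symm.trans h4)
  · have h3 : (e*y)*a - e*(y*a) = -(e*(y*a)) := by rw [hy1, zero_mul, zero_sub]
    have h4 : (e*y)*a - e*(y*a) = 0 := by rw [lswap12 halt e y a, h7, neg_zero]
    exact neg_eq_zero.mp (h3.symm.trans h4)
  · have h3 : (y*a)*e - y*(a*e) = (y*a)*e := by rw [ha2, mul_zero, sub_zero]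
    have h4 : (y*a)*e - y*(a*e) = 0 := by rw [lswap23 halt y a e, h7, neg_zero]
    exact h3.symm.trans h4

lemma flex_e (halt : IsAlt R) (e u : R) : (e*u)*e = e*(u*e) := by
  have h0 : (u*e)*e - u*(e*e) = 0 := by rw [(halt e u).2, sub_self]
  have h1 : (e*u)*e - e*(u*e) = 0 := by rw [lswap12 halt e u e, h0, neg_zero]
  exact sub_eq_zero.mp h1

lemma mul_e_e (halt : IsAlt R) (e : R) (he : e * e = e) (u : R) : (u*e)*e = u*e := by
  rw [(halt e u).2, he]

lemma e_mul_e (halt : IsAlt R) (e : R) (he : e * e = e) (u : R) : e*(e*u) = e*u := by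
  rw [← (halt e u).1, he]

lemma kk_expand (halt : IsAlt R) (e : R) (he : e * e = e) (u : R) :
    ((u*e - e*u)*e - e*(u*e - e*u)) = u*e + e*u - e*(u*e) - e*(u*e) := by
  rw [sub_mul, mul_sub, mul_e_e halt e he, flex_e halt e, e_mul_e halt e he]
  abel

lemma k3_eq (halt : IsAlt R) (e : R) (he : e * e = e) (u : R) :
    (((u*e - e*u)*e - e*(u*e - e*u))*e - e*((u*e - e*u)*e - e*(u*e - e*u)))
      = u*e - e*u := by
  have h2 : (e*(u*e))*e = e*(u*e) := by
    rw [flex_e halt e (u*e), mul_e_e halt e he]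
  have h1 : (u*e + e*u - e*(u*e) - e*(u*e))*e = u*e - e*(u*e) := by
    rw [sub_mul, sub_mul, add_mul, mul_e_e halt e he u, flex_e halt e u, h2]
    abel
  have h3 : e*(u*e + e*u - e*(u*e) - e*(u*e)) = e*u - e*(u*e) := by
    rw [mul_sub, mul_sub, mul_add, e_mul_e halt e he u, e_mul_e halt e he (u*e)]
    abel
  rw [kk_expand halt e he u, h1, h3]
  abel

end AltHelpers

section KappaBasic
variable {R : Type*} [NonUnitalNonAssocRing R]

lemma kappa_apply (e u : R) : kappa e u = u * e - e * u := rfl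

lemma kappa_add (e u v : R) : kappa e (u + v) = kappa e u + kappa e v := by
  simp only [kappa_apply, add_mul, mul_add]; abel

lemma kappa_sub (e u v : R) : kappa e (u - v) = kappa e u - kappa e v := by
  simp only [kappa_apply, sub_mul, mul_sub]; abel

lemma kappa_zero (e : R) : kappa e 0 = 0 := by simp [kappa_apply]

lemma kappa_neg (e u : R) : kappa e (-u) = - kappa e u := by
  simp only [kappa_apply, neg_mul, mul_neg]; abel

lemma kappa_iter_add (e : R) : ∀ (p : ℕ) (u v : R),
    (kappa e)^[p] (u + v) = (kappa e)^[p] u + (kappa e)^[p] v := by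
  intro p
  induction p with
  | zero => intro u v; simp
  | succ p ih =>
    intro u v
    rw [Function.iterate_succ_apply, Function.iterate_succ_apply,
      Function.iterate_succ_apply, kappa_add, ih]

lemma kappa_three (halt : IsAlt R) (e : R) (he : e * e = e) (u : R) :
    kappa e (kappa e (kappa e u)) = kappa e u := k3_eq halt e he u

lemma kappa_odd (halt : IsAlt R) (e : R) (he : e * e = e) :
    ∀ (p : ℕ) (u : R), (kappa e)^[2*p+1] u = kappa e u := by
  intro p
  induction p with
  | zero => intro u; simp
  | succ p ih =>
    intro u
    have h : 2*(p+1)+1 = (2*p+1) + 2 := by omega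
    rw [h, Function.iterate_add_apply]
    rw [ih]
    have h2 : (kappa e)^[2] u = kappa e (kappa e u) := by
      rw [Function.iterate_succ_apply, Function.iterate_one]
    rw [h2, kappa_three halt e he]

end KappaBasic

section Laws
variable {R : Type*} [NonUnitalNonAssocRing R]

/-- Tail terms of the one-slot law. -/
def T1fun (D : R → R) (e : R) (m : ℕ) (u : R) : R :=
  ∑ i : Fin (m+1), pn (m+2)
    (Function.update (fun j : Fin (m+2) => if j = 0 then u else e) i.succ (D e))

/-- Tail terms of the two-slot law. -/
def T2fun (D : R → R) (e : R) (m : ℕ) (x y : R) : R :=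
  ∑ i : Fin m, pn (m+2)
    (Function.update (fun j : Fin (m+2) => if j = 0 then x else if j = 1 then y else e)
      i.succ.succ (D e))

lemma T1fun_add (D : R → R) (e : R) (m : ℕ) (u v : R) :
    T1fun D e m (u + v) = T1fun D e m u + T1fun D e m v := by
  unfold T1fun
  rw [← Finset.sum_add_distrib]
  apply Finset.sum_congr rfl
  intro i _
  have hrw : ∀ w : R,
      Function.update (fun j : Fin (m+2) => if j = 0 then w else e) i.succ (D e)
        = Function.update (fun j : Fin (m+2) => if j = i.succ then D e else e) 0 w := by
    intro w
    funext j
    simp only [Function.update_apply]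
    split_ifs <;>
      first
      | rfl
      | (exfalso; simp only [Fin.ext_iff, Fin.val_succ, Fin.val_zero] at *; omega)
  rw [hrw, hrw, hrw]
  exact pn_update_add m _ 0 u v

lemma law1 (D : R → R) (e : R) (m : ℕ) (hD : IsMultLieNDeriv (m+2) D) (u : R) :
    D ((kappa e)^[m+1] u) = (kappa e)^[m+1] (D u) + T1fun D e m u := by
  have h := hD (fun j : Fin (m+2) => if j = 0 then u else e)
  rw [pn_vtup e (m+1) u, Fin.sum_univ_succ] at h
  have hb0 : (if (0 : Fin (m+2)) = 0 then u else e) = u := by norm_num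
  rw [hb0] at h
  have h0 : Function.update (fun j : Fin (m+2) => if j = 0 then u else e) 0 (D u)
      = (fun j : Fin (m+2) => if j = 0 then D u else e) := by
    funext j
    simp only [Function.update_apply]
    split_ifs <;> rfl
  rw [h0, pn_vtup e (m+1) (D u)] at h
  have h1 : ∀ i : Fin (m+1),
      pn (m+2) (Function.update (fun j : Fin (m+2) => if j = 0 then u else e) i.succ
        (D (if (i.succ : Fin (m+2)) = 0 then u else e)))
      = pn (m+2) (Function.update (fun j : Fin (m+2) => if j = 0 then u else e) i.succ (D e)) := by
    intro i
    rw [if_neg (Fin.succ_ne_zero i)]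
  rw [Finset.sum_congr rfl (fun i _ => h1 i)] at h
  exact h

lemma T2fun_add1 (D : R → R) (e : R) (m : ℕ) (x x' y : R) :
    T2fun D e m (x + x') y = T2fun D e m x y + T2fun D e m x' y := by
  unfold T2fun
  rw [← Finset.sum_add_distrib]
  apply Finset.sum_congr rfl
  intro i _
  have hrw : ∀ w : R,
      Function.update (fun j : Fin (m+2) => if j = 0 then w else if j = 1 then y else e)
        i.succ.succ (D e)
      = Function.update
          (fun j : Fin (m+2) => if j = 1 then y else if j = i.succ.succ then D e else e) 0 w := by
    intro w
    funext j
    simp only [Function.update_apply]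
    split_ifs <;>
      first
      | rfl
      | (exfalso; simp only [Fin.ext_iff, Fin.val_succ, Fin.val_zero, Fin.val_one] at *; omega)
  rw [hrw, hrw, hrw]
  exact pn_update_add m _ 0 x x'

lemma law2 (D : R → R) (e : R) (m : ℕ) (hD : IsMultLieNDeriv (m+2) D) (x y : R) :
    D ((kappa e)^[m] (x*y - y*x))
      = (kappa e)^[m] ((D x)*y - y*(D x)) + (kappa e)^[m] (x*(D y) - (D y)*x)
          + T2fun D e m x y := by
  have h := hD (fun j : Fin (m+2) => if j = 0 then x else if j = 1 then y else e)
  rw [pn_btup e m x y, Fin.sum_univ_succ, Fin.sum_univ_succ] at h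
  have hsucc0 : (Fin.succ (0 : Fin (m+1)) : Fin (m+2)) = 1 := by
    simp [Fin.ext_iff]
  rw [hsucc0] at h
  have hb0 : (if (0 : Fin (m+2)) = 0 then x else if (0 : Fin (m+2)) = 1 then y else e) = x := by
    norm_num
  have hb1 : (if (1 : Fin (m+2)) = 0 then x else if (1 : Fin (m+2)) = 1 then y else e) = y := by
    norm_num
  rw [hb0, hb1] at h
  have hu0 : Function.update
      (fun j : Fin (m+2) => if j = 0 then x else if j = 1 then y else e) 0 (D x)
      = (fun j : Fin (m+2) => if j = 0 then D x else if j = 1 then y else e) := by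
    funext j
    simp only [Function.update_apply]
    split_ifs <;> rfl
  have hu1 : Function.update
      (fun j : Fin (m+2) => if j = 0 then x else if j = 1 then y else e) 1 (D y)
      = (fun j : Fin (m+2) => if j = 0 then x else if j = 1 then D y else e) := by
    funext j
    simp only [Function.update_apply]
    split_ifs <;>
      first
      | rfl
      | (exfalso; simp only [Fin.ext_iff, Fin.val_zero, Fin.val_one] at *; omega)
  rw [hu0, hu1, pn_btup e m (D x) y, pn_btup e m x (D y)] at h
  have htail : ∀ i : Fin m,
      pn (m+2) (Function.update
        (fun j : Fin (m+2) => if j = 0 then x else if j = 1 then y else e) i.succ.succ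
        (D (if (i.succ.succ : Fin (m+2)) = 0 then x
            else if (i.succ.succ : Fin (m+2)) = 1 then y else e)))
      = pn (m+2) (Function.update
        (fun j : Fin (m+2) => if j = 0 then x else if j = 1 then y else e) i.succ.succ (D e)) := by
    intro i
    have hn0 : (i.succ.succ : Fin (m+2)) ≠ 0 := Fin.succ_ne_zero _
    have hn1 : (i.succ.succ : Fin (m+2)) ≠ 1 := by
      intro hh
      have := congrArg Fin.val hh
      simp only [Fin.val_succ, Fin.val_one] at this
      omega
    rw [if_neg hn0, if_neg hn1]
  rw [Finset.sum_congr rfl (fun i _ => htail i)] at h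
  rw [← add_assoc] at h
  exact h

/-- The combined tail of the master relation. -/
def LLfun (D : R → R) (e : R) (m : ℕ) (x y : R) : R :=
  (kappa e)^[m+1] (T2fun D e m x y) + T1fun D e m ((kappa e)^[m] (x*y - y*x))

lemma master (halt : IsAlt R) (e : R) (he : e * e = e) (D : R → R) (m : ℕ)
    (hD : IsMultLieNDeriv (m+2) D) (x y : R) :
    D (kappa e (x*y - y*x))
      = kappa e ((D x)*y - y*(D x)) + kappa e (x*(D y) - (D y)*x) + LLfun D e m x y := by
  have hcomp : ∀ w : R, (kappa e)^[m+1] ((kappa e)^[m] w) = kappa e w := by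
    intro w
    rw [← Function.iterate_add_apply]
    have hmm : m+1+m = 2*m+1 := by omega
    rw [hmm]
    exact kappa_odd halt e he m w
  have h1 := law1 D e m hD ((kappa e)^[m] (x*y - y*x))
  rw [hcomp, law2 D e m hD x y] at h1
  rw [kappa_iter_add, kappa_iter_add, hcomp, hcomp] at h1
  rw [h1]
  unfold LLfun
  abel

lemma LLfun_add1 (D : R → R) (e : R) (m : ℕ) (x x' y : R) :
    LLfun D e m (x + x') y = LLfun D e m x y + LLfun D e m x' y := by
  unfold LLfun
  have h1 : (x+x')*y - y*(x+x') = (x*y - y*x) + (x'*y - y*x') := by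
    rw [add_mul, mul_add]; abel
  rw [h1, kappa_iter_add, T1fun_add, T2fun_add1, kappa_iter_add]
  abel

end Laws

theorem stmt2 {R : Type*} [NonUnitalNonAssocRing R] (halt : IsAlt R)
    (e₁ : R) (he : e₁ * e₁ = e₁) (hne : e₁ ≠ 0)
    (hnu : ¬ ∀ x : R, e₁ * x = x ∧ x * e₁ = x)
    (hcondi : ∀ a ∈ P11 e₁, ∀ b ∈ P22 e₁,
      (∀ x ∈ P12 e₁, (a + b) * x = x * (a + b)) → a + b ∈ rctr R)
    (hcondii : ∀ a ∈ P11 e₁, ∀ b ∈ P22 e₁,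
      (∀ x ∈ P21 e₁, (a + b) * x = x * (a + b)) → a + b ∈ rctr R)
    (n : ℕ) (hn : 2 ≤ n) (D : R → R) (hD : IsMultLieNDeriv n D) :
    ∀ a ∈ P12 e₁, ∀ b ∈ P21 e₁, D (a + b) = D a + D b := by
  intro a ha b hb
  obtain ⟨ha1, ha2⟩ := ha
  obtain ⟨hb1, hb2⟩ := hb
  obtain ⟨m, rfl⟩ : ∃ m, n = m + 2 := ⟨n - 2, by omega⟩
  -- D 0 = 0
  have hD0 : D 0 = 0 := by
    have h := hD (fun _ : Fin (m+2) => (0:R))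
    have hz : pn (m+2) (fun _ : Fin (m+2) => (0:R)) = 0 :=
      pn_isolated m _ 0 (fun j _ => rfl)
    rw [hz] at h
    rw [h]
    apply Finset.sum_eq_zero
    intro i _
    apply pn_isolated m _ i
    intro j hj
    simp [Function.update_apply, hj]
  set Γ := D (e₁ + a) - D e₁ - D a with hΓ
  have hGsum : D (e₁ + a) = Γ + D e₁ + D a := by rw [hΓ]; abel
  -- the heart relation
  have hearts : ∀ w : R,
      D (kappa e₁ ((e₁+a)*w - w*(e₁+a)))
        = D (kappa e₁ (e₁*w - w*e₁)) + D (kappa e₁ (a*w - w*a))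
            + kappa e₁ (Γ*w - w*Γ) := by
    intro w
    have eq1 := master halt e₁ he D m hD (e₁+a) w
    have eq2 := master halt e₁ he D m hD e₁ w
    have eq3 := master halt e₁ he D m hD a w
    have hsplit1 : kappa e₁ ((D (e₁+a))*w - w*(D (e₁+a)))
        = kappa e₁ (Γ*w - w*Γ) + kappa e₁ ((D e₁)*w - w*(D e₁))
            + kappa e₁ ((D a)*w - w*(D a)) := by
      have hx : (D (e₁+a))*w - w*(D (e₁+a))
          = (Γ*w - w*Γ) + (((D e₁)*w - w*(D e₁)) + ((D a)*w - w*(D a))) := by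
        rw [hGsum, add_mul, add_mul, mul_add, mul_add]
        abel
      rw [hx, kappa_add, kappa_add]
      abel
    have hsplit2 : kappa e₁ ((e₁+a)*(D w) - (D w)*(e₁+a))
        = kappa e₁ (e₁*(D w) - (D w)*e₁) + kappa e₁ (a*(D w) - (D w)*a) := by
      have hx : (e₁+a)*(D w) - (D w)*(e₁+a)
          = (e₁*(D w) - (D w)*e₁) + (a*(D w) - (D w)*a) := by
        rw [add_mul, mul_add]; abel
      rw [hx, kappa_add]
    have hLL : LLfun D e₁ m (e₁+a) w = LLfun D e₁ m e₁ w + LLfun D e₁ m a w :=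
      LLfun_add1 D e₁ m e₁ a w
    rw [hsplit1, hsplit2, hLL] at eq1
    rw [eq1, eq2, eq3]
    abel
  -- basic kappa values
  have hka : kappa e₁ a = -a := by rw [kappa_apply, ha1, ha2]; abel
  have hkna : kappa e₁ (-a) = a := by rw [kappa_neg, hka, neg_neg]
  have hkb : kappa e₁ b = b := by rw [kappa_apply, hb1, hb2, sub_zero]
  -- Instance 1 : kappa² Γ = 0
  have hkk : kappa e₁ (kappa e₁ Γ) = 0 := by
    have hI1 := hearts e₁
    have harg1 : (e₁+a)*e₁ - e₁*(e₁+a) = -a := by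
      rw [add_mul, mul_add, he, ha1, ha2]; abel
    have hargee : e₁*e₁ - e₁*e₁ = (0:R) := sub_self _
    have harg3 : a*e₁ - e₁*a = -a := by rw [ha1, ha2]; abel
    rw [harg1, hargee, harg3, hkna, kappa_zero, hD0] at hI1
    have hx : 0 + D a + kappa e₁ (Γ*e₁ - e₁*Γ) = D a := hI1.symm
    rw [zero_add] at hx
    have hy := add_eq_left.mp hx
    rw [kappa_apply e₁ Γ]
    exact hy
  -- Instance 2 : kappa (Γ*y - y*Γ) = 0 for y ∈ P21
  have hI2 : ∀ y : R, e₁*y = 0 → y*e₁ = y → kappa e₁ (Γ*y - y*Γ) = 0 := by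
    intro y hy1 hy2
    have h := hearts y
    have harg1 : (e₁+a)*y - y*(e₁+a) = (a*y - y*a) - y := by
      rw [add_mul, mul_add, hy1, hy2]; abel
    have harg2 : e₁*y - y*e₁ = -y := by rw [hy1, hy2]; abel
    have hpa := PL_ay halt e₁ a y ha1 ha2 hy1 hy2
    have hkay : kappa e₁ (a*y - y*a) = 0 := by
      rw [kappa_sub, kappa_apply, kappa_apply, hpa.1.1, hpa.1.2, hpa.2.1, hpa.2.2]
      abel
    have hky : kappa e₁ y = y := by rw [kappa_apply, hy1, hy2, sub_zero]
    have hkny : kappa e₁ (-y) = -y := by rw [kappa_neg, hky]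
    have hkarg1 : kappa e₁ ((a*y - y*a) - y) = -y := by
      rw [kappa_sub, hkay, hky]; abel
    rw [harg1, harg2, hkarg1, hkny, hkay, hD0] at h
    have hx : D (-y) + 0 + kappa e₁ (Γ*y - y*Γ) = D (-y) := h.symm
    rw [add_zero] at hx
    exact add_eq_left.mp hx
  -- Peirce decomposition of Γ
  obtain ⟨g1, g2, hg1m, hg2m, hgsum⟩ :
      ∃ g1 g2 : R, (e₁*g1 = g1 ∧ g1*e₁ = g1) ∧ (e₁*g2 = 0 ∧ g2*e₁ = 0) ∧ g1 + g2 = Γ := by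
    have hee1 : e₁*(e₁*Γ) = e₁*Γ := e_mul_e halt e₁ he Γ
    have hee2 : e₁*(e₁*(Γ*e₁)) = e₁*(Γ*e₁) := e_mul_e halt e₁ he (Γ*e₁)
    have hf1 : (e₁*Γ)*e₁ = e₁*(Γ*e₁) := flex_e halt e₁ Γ
    have hf2 : (Γ*e₁)*e₁ = Γ*e₁ := mul_e_e halt e₁ he Γ
    have hf3 : (e₁*(Γ*e₁))*e₁ = e₁*(Γ*e₁) := by
      rw [flex_e halt e₁ (Γ*e₁), hf2]
    refine ⟨e₁*(Γ*e₁), Γ - e₁*Γ - Γ*e₁ + e₁*(Γ*e₁), ⟨?_, ?_⟩, ⟨?_, ?_⟩, ?_⟩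
    · exact hee2
    · exact hf3
    · rw [mul_add, mul_sub, mul_sub, hee1, hee2]; abel
    · rw [add_mul, sub_mul, sub_mul, hf1, hf2, hf3]; abel
    · have h0 : Γ*e₁ + e₁*Γ - e₁*(Γ*e₁) - e₁*(Γ*e₁) = 0 := by
        rw [← kk_expand halt e₁ he Γ]
        exact hkk
      apply eq_of_sub_eq_zero
      calc e₁*(Γ*e₁) + (Γ - e₁*Γ - Γ*e₁ + e₁*(Γ*e₁)) - Γ
          = -(Γ*e₁ + e₁*Γ - e₁*(Γ*e₁) - e₁*(Γ*e₁)) := by abel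
        _ = 0 := by rw [h0, neg_zero]
  -- Γ commutes with P21
  have hcomm : ∀ y, e₁*y = 0 → y*e₁ = y → Γ*y = y*Γ := by
    intro y hy1 hy2
    have hky := hI2 y hy1 hy2
    have h1 : g1*y = 0 := PL_py halt e₁ g1 y hg1m.1 hg1m.2 hy1 hy2
    have h2 : y*g2 = 0 := PL_yq halt e₁ g2 y hg2m.1 hg2m.2 hy1 hy2
    have h3 := PL_qy halt e₁ g2 y hg2m.1 hg2m.2 hy1 hy2
    have h4 := PL_yp halt e₁ g1 y hg1m.1 hg1m.2 hy1 hy2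
    have hrep : Γ*y - y*Γ = g2*y - y*g1 := by
      rw [← hgsum, add_mul, mul_add, h1, h2]
      abel
    have hval : kappa e₁ (g2*y - y*g1) = g2*y - y*g1 := by
      rw [kappa_apply, sub_mul, mul_sub, h3.1, h3.2, h4.1, h4.2]
      abel
    have hz : g2*y - y*g1 = 0 := by
      rw [← hval, ← hrep]
      exact hky
    have hz2 : Γ*y - y*Γ = 0 := by rw [hrep]; exact hz
    exact sub_eq_zero.mp hz2
  -- Γ is central
  have hcent : Γ ∈ rctr R := by
    have hc := hcondii g1 ⟨hg1m.1, hg1m.2⟩ g2 ⟨hg2m.1, hg2m.2⟩ ?_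
    · rwa [hgsum] at hc
    · intro x hx
      rw [hgsum]
      exact hcomm x hx.1 hx.2
  -- Instance 3 with w = e₁ + (-b)
  have hnb1 : e₁*(-b) = 0 := by rw [mul_neg, hb1, neg_zero]
  have hnb2 : (-b)*e₁ = -b := by rw [neg_mul, hb2]
  have hpa := PL_ay halt e₁ a (-b) ha1 ha2 hnb1 hnb2
  have hkprod : kappa e₁ (a*(-b) - (-b)*a) = 0 := by
    rw [kappa_sub, kappa_apply, kappa_apply, hpa.1.1, hpa.1.2, hpa.2.1, hpa.2.2]
    abel
  have h := hearts (e₁ + -b)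
  have hX1 : (e₁+a)*(e₁ + -b) - (e₁ + -b)*(e₁+a) = (a*(-b) - (-b)*a) - a + b := by
    simp only [add_mul, mul_add, he, ha1, ha2, hnb1, hnb2]
    abel
  have hkX1 : kappa e₁ ((a*(-b) - (-b)*a) - a + b) = a + b := by
    rw [kappa_add, kappa_sub, hkprod, hka, hkb]
    abel
  have hX2 : e₁*(e₁ + -b) - (e₁ + -b)*e₁ = b := by
    simp only [mul_add, add_mul, he, hnb1, hnb2]
    abel
  have hX3 : a*(e₁ + -b) - (e₁ + -b)*a = (a*(-b) - (-b)*a) - a := by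
    simp only [mul_add, add_mul, ha1, ha2]
    abel
  have hkX3 : kappa e₁ ((a*(-b) - (-b)*a) - a) = a := by
    rw [kappa_sub, hkprod, hka]
    abel
  have hcentra : Γ*(e₁ + -b) - (e₁ + -b)*Γ = 0 :=
    sub_eq_zero_of_eq (hcent (e₁ + -b))
  rw [hX1, hX2, hX3, hkX1, hkb, hkX3, hcentra, kappa_zero, add_zero] at h
  rw [h]
  exact add_comm _ _
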